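/- arXiv:2109.15208 — 2 statements merged into one kernel-verified Lean document; each statement's English description precedes it below -/
import Mathlib

section
/- Let H be a real Hilbert space and for ε > 0 set Ψ̂_ε(z) = ‖z‖ + ε·F(‖z‖), where F(r) = -r - log(1-r) on [0,1) and +∞ otherwise. Then as ε → 0⁺, Ψ̂_ε converges in the sense of Mosco to Ψ_{‖·‖}, where Ψ_{‖·‖}(z) = ‖z‖ if ‖z‖ ≤ 1 and +∞ if ‖z‖ > 1. That is: (i) for every z ∈ H and every sequence z_ε ⇀ z weakly in H, Ψ_{‖·‖}(z) ≤ liminf Ψ̂_ε(z_ε); (ii) for every z ∈ H there exists z_ε → z strongly in H with Ψ̂_ε(z_ε) → Ψ_{‖·‖}(z). -/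
open RealInnerProductSpace Classical Filter

theorem norm_weak_lsc_aux {H : Type*} [NormedAddCommGroup H] [InnerProductSpace ℝ H]
    (z : H) (zseq : ℕ → H)
    (hw : ∀ w : H, Tendsto (fun n => ⟪w, zseq n⟫) atTop (nhds ⟪w, z⟫))
    (b : ℝ) (hb : b < ‖z‖) : ∀ᶠ n in atTop, b < ‖zseq n‖ := by
  rcases lt_or_ge b 0 with h | h
  · exact Eventually.of_forall fun n => h.trans_le (norm_nonneg _)
  · have hz : 0 < ‖z‖ := lt_of_le_of_lt h hb
    have h1 : Tendsto (fun n => ⟪z, zseq n⟫) atTop (nhds (‖z‖ * ‖z‖)) := by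
      simpa [real_inner_self_eq_norm_mul_norm, ← sq] using hw z
    have h2 : ∀ᶠ n in atTop, b * ‖z‖ < ⟪z, zseq n⟫ :=
      h1.eventually_const_lt (by nlinarith)
    filter_upwards [h2] with n hn
    have := real_inner_le_norm z (zseq n)
    nlinarith

/-- Mosco convergence, as `ε → 0⁺`, of `Ψ̂_ε(z) = ‖z‖ + ε F(‖z‖)` (with
`F(r) = -r - log(1-r)` on `[0,1)`, `+∞` elsewhere) to `Ψ_{‖·‖}`, which equals
`‖z‖` for `‖z‖ ≤ 1` and `+∞` otherwise: (i) a liminf inequality along weakly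
convergent sequences, and (ii) existence of a strongly convergent recovery
sequence. -/
theorem mosco_convergence_viscous_dissipation {H : Type*} [NormedAddCommGroup H]
    [InnerProductSpace ℝ H]
    (F : ℝ → EReal)
    (hF : ∀ r : ℝ, F r = if r ∈ Set.Ico (0 : ℝ) 1
        then ((-r - Real.log (1 - r) : ℝ) : EReal) else ⊤)
    (Ψhat : ℝ → H → EReal)
    (hΨhat : ∀ (ε : ℝ) (z : H), Ψhat ε z = ((‖z‖ : ℝ) : EReal) + (ε : EReal) * F ‖z‖)
    (Ψ : H → EReal)
    (hΨ : ∀ z : H, Ψ z = if ‖z‖ ≤ 1 then ((‖z‖ : ℝ) : EReal) else ⊤) :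
    (∀ (ε : ℕ → ℝ), (∀ n, 0 < ε n) → Tendsto ε atTop (nhds 0) →
      ∀ (z : H) (zseq : ℕ → H),
        (∀ w : H, Tendsto (fun n => ⟪w, zseq n⟫) atTop (nhds ⟪w, z⟫)) →
        Ψ z ≤ liminf (fun n => Ψhat (ε n) (zseq n)) atTop) ∧
    (∀ (ε : ℕ → ℝ), (∀ n, 0 < ε n) → Tendsto ε atTop (nhds 0) →
      ∀ z : H, ∃ zseq : ℕ → H, Tendsto zseq atTop (nhds z) ∧
        Tendsto (fun n => Ψhat (ε n) (zseq n)) atTop (nhds (Ψ z))) := by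
  constructor
  · -- liminf inequality
    intro ε hε hε0 z zseq hw
    have hlow : ∀ n, ((‖zseq n‖ : ℝ) : EReal) ≤ Ψhat (ε n) (zseq n) := by
      intro n
      rw [hΨhat, hF]
      by_cases h : ‖zseq n‖ ∈ Set.Ico (0 : ℝ) 1
      · rw [if_pos h]
        have hF0 : (0 : ℝ) ≤ -‖zseq n‖ - Real.log (1 - ‖zseq n‖) := by
          have := Real.log_le_sub_one_of_pos (x := 1 - ‖zseq n‖) (by linarith [h.2])
          linarith
        have h0 : (0 : EReal) ≤ (ε n : EReal) *
            ((-‖zseq n‖ - Real.log (1 - ‖zseq n‖) : ℝ) : EReal) := by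
          rw [← EReal.coe_mul]
          exact_mod_cast mul_nonneg (le_of_lt (hε n)) hF0
        exact le_add_of_nonneg_right h0
      · rw [if_neg h, EReal.mul_top_of_pos (by exact_mod_cast hε n), EReal.coe_add_top]
        exact le_top
    rw [hΨ]
    by_cases hz : ‖z‖ ≤ 1
    · rw [if_pos hz, le_liminf_iff]
      intro b hb
      induction b with
      | bot =>
        exact Eventually.of_forall fun n =>
          lt_of_lt_of_le (bot_lt_iff_ne_bot.2 (EReal.coe_ne_bot _)) (hlow n)
      | coe b =>
        have hb' : b < ‖z‖ := by exact_mod_cast hb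
        filter_upwards [norm_weak_lsc_aux z zseq hw b hb'] with n hn
        exact lt_of_lt_of_le (by exact_mod_cast hn) (hlow n)
      | top => exact absurd hb (by simp)
    · rw [if_neg hz, le_liminf_iff]
      intro b hb
      push_neg at hz
      filter_upwards [norm_weak_lsc_aux z zseq hw 1 hz] with n hn
      have htop : Ψhat (ε n) (zseq n) = ⊤ := by
        rw [hΨhat, hF, if_neg (by simp only [Set.mem_Ico]; intro h; linarith),
          EReal.mul_top_of_pos (by exact_mod_cast hε n), EReal.coe_add_top]
      rw [htop]; exact hb
  · -- recovery sequence
    intro ε hε hε0 z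
    by_cases hz : ‖z‖ ≤ 1
    · set δ : ℕ → ℝ := fun n => Real.exp (-1 / Real.sqrt (ε n)) with hδdef
      have hδpos : ∀ n, 0 < δ n := fun n => Real.exp_pos _
      have hsqrtpos : ∀ n, 0 < Real.sqrt (ε n) := fun n => Real.sqrt_pos.2 (hε n)
      have hδlt : ∀ n, δ n < 1 := fun n =>
        Real.exp_lt_one_iff.2 (div_neg_of_neg_of_pos (by norm_num) (hsqrtpos n))
      have hs : Tendsto (fun n => Real.sqrt (ε n)) atTop (nhds 0) := by
        have := (Real.continuous_sqrt.tendsto 0).comp hε0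
        simpa [Function.comp_def] using this
      have hs' : Tendsto (fun n => Real.sqrt (ε n)) atTop (nhdsWithin 0 (Set.Ioi 0)) :=
        tendsto_nhdsWithin_iff.2 ⟨hs, Eventually.of_forall fun n => hsqrtpos n⟩
      have hinv : Tendsto (fun n => (Real.sqrt (ε n))⁻¹) atTop atTop :=
        tendsto_inv_nhdsGT_zero.comp hs'
      have hδ0 : Tendsto δ atTop (nhds 0) := by
        rw [hδdef]
        simp only [neg_div, one_div]
        exact Real.tendsto_exp_atBot.comp (tendsto_neg_atTop_atBot.comp hinv)
      refine ⟨fun n => (1 - δ n) • z, ?_, ?_⟩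
      · have h1 : Tendsto (fun n => (1 - δ n)) atTop (nhds 1) := by
          simpa using tendsto_const_nhds.sub hδ0
        simpa using h1.smul_const z
      · have hnorm : ∀ n, ‖(1 - δ n) • z‖ = (1 - δ n) * ‖z‖ := by
          intro n
          rw [norm_smul, Real.norm_eq_abs, abs_of_pos (by linarith [hδlt n])]
        have hrle : ∀ n, (1 - δ n) * ‖z‖ ≤ 1 - δ n := fun n =>
          mul_le_of_le_one_right (by linarith [hδlt n]) hz
        have hmem : ∀ n, (1 - δ n) * ‖z‖ ∈ Set.Ico (0 : ℝ) 1 := fun n =>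
          ⟨mul_nonneg (by linarith [hδlt n]) (norm_nonneg z),
           lt_of_le_of_lt (hrle n) (by linarith [hδpos n])⟩
        have hval : ∀ n, Ψhat (ε n) ((1 - δ n) • z)
            = (((1 - δ n) * ‖z‖ + ε n * (-((1 - δ n) * ‖z‖)
                - Real.log (1 - (1 - δ n) * ‖z‖)) : ℝ) : EReal) := by
          intro n
          rw [hΨhat, hnorm n, hF, if_pos (hmem n), ← EReal.coe_mul, ← EReal.coe_add]
        rw [hΨ, if_pos hz]
        have hr : Tendsto (fun n => (1 - δ n) * ‖z‖) atTop (nhds ‖z‖) := by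
          simpa using ((tendsto_const_nhds (x := (1:ℝ))).sub hδ0).mul_const ‖z‖
        have hprod : Tendsto
            (fun n => ε n * (-((1 - δ n) * ‖z‖) - Real.log (1 - (1 - δ n) * ‖z‖)))
            atTop (nhds 0) := by
          have hlo : ∀ n, (0 : ℝ) ≤ ε n * (-((1 - δ n) * ‖z‖)
              - Real.log (1 - (1 - δ n) * ‖z‖)) := by
            intro n
            have h1 := (hmem n).2
            have := Real.log_le_sub_one_of_pos (x := 1 - (1 - δ n) * ‖z‖) (by linarith)
            exact mul_nonneg (le_of_lt (hε n)) (by linarith)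
          have hhi : ∀ n, ε n * (-((1 - δ n) * ‖z‖)
              - Real.log (1 - (1 - δ n) * ‖z‖)) ≤ Real.sqrt (ε n) := by
            intro n
            have hd : δ n ≤ 1 - (1 - δ n) * ‖z‖ := by linarith [hrle n]
            have hlog : Real.log (δ n) ≤ Real.log (1 - (1 - δ n) * ‖z‖) :=
              Real.log_le_log (hδpos n) hd
            have hle : -((1 - δ n) * ‖z‖) - Real.log (1 - (1 - δ n) * ‖z‖)
                ≤ (Real.sqrt (ε n))⁻¹ := by
              have : Real.log (δ n) = -1 / Real.sqrt (ε n) := by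
                rw [hδdef]; exact Real.log_exp _
              have h0 := (hmem n).1
              rw [neg_div, one_div] at this
              nlinarith [hlog, this]
            calc ε n * (-((1 - δ n) * ‖z‖) - Real.log (1 - (1 - δ n) * ‖z‖))
                ≤ ε n * (Real.sqrt (ε n))⁻¹ :=
                  mul_le_mul_of_nonneg_left hle (le_of_lt (hε n))
              _ = Real.sqrt (ε n) := by
                  rw [← div_eq_mul_inv, Real.div_sqrt]
          exact tendsto_of_tendsto_of_tendsto_of_le_of_le tendsto_const_nhds hs hlo hhi
        have hsum : Tendsto (fun n => (1 - δ n) * ‖z‖ + ε n * (-((1 - δ n) * ‖z‖)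
            - Real.log (1 - (1 - δ n) * ‖z‖))) atTop (nhds ‖z‖) := by
          simpa using hr.add hprod
        have := (EReal.tendsto_coe (a := ‖z‖)).2 hsum
        exact Tendsto.congr (fun n => (hval n).symm) this
    · push_neg at hz
      refine ⟨fun _ => z, tendsto_const_nhds, ?_⟩
      have htop : ∀ n, Ψhat (ε n) z = ⊤ := by
        intro n
        rw [hΨhat, hF, if_neg (by simp only [Set.mem_Ico]; intro h; linarith),
          EReal.mul_top_of_pos (by exact_mod_cast hε n), EReal.coe_add_top]
      rw [hΨ, if_neg (not_le.2 hz)]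
      simp only [htop]
      exact tendsto_const_nhds
end

section
/- Let g, g_ε : [0, T̂] → ℝ be measurable with 0 ≤ g_ε ≤ 1 a.e., g_ε ⇀* g in L^∞(0,T̂) and h_ε, h : [0,T̂] → [0,∞) measurable with g_ε + h_ε = 1 a.e. for each ε, g + h ≤ 1 a.e., and limsup_ε ∫₀^τ h_ε ≤ ∫₀^τ h for all τ ∈ [0,T̂]. Then g + h = 1 a.e. on [0,T̂]. -/
open MeasureTheory Set Filter

/-- If `0 ≤ g_ε ≤ 1`, `g_ε ⇀* g` in `L^∞(0,T̂)`, `g_ε + h_ε = 1` a.e.,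
`g + h ≤ 1` a.e., and `limsup_ε ∫₀^τ h_ε ≤ ∫₀^τ h` for all `τ`, then
`g + h = 1` a.e. on `[0,T̂]`. -/
theorem limit_constraint_equality (That : ℝ) (hThat : 0 < That)
    (g h : ℝ → ℝ) (gseq hseq : ℕ → ℝ → ℝ)
    (hgm : Measurable g) (hhm : Measurable h)
    (hgseqm : ∀ n, Measurable (gseq n)) (hhseqm : ∀ n, Measurable (hseq n))
    (hgint : Integrable g (volume.restrict (Ioc (0 : ℝ) That)))
    (hhint : Integrable h (volume.restrict (Ioc (0 : ℝ) That)))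
    (hgseq01 : ∀ n, ∀ᵐ x ∂(volume.restrict (Ioc (0 : ℝ) That)),
      0 ≤ gseq n x ∧ gseq n x ≤ 1)
    (hhseqnn : ∀ n, ∀ᵐ x ∂(volume.restrict (Ioc (0 : ℝ) That)), 0 ≤ hseq n x)
    (hhnn : ∀ᵐ x ∂(volume.restrict (Ioc (0 : ℝ) That)), 0 ≤ h x)
    (hweakstar : ∀ φ : ℝ → ℝ, Integrable φ (volume.restrict (Ioc (0 : ℝ) That)) →
      Tendsto (fun n => ∫ x, gseq n x * φ x ∂(volume.restrict (Ioc (0 : ℝ) That)))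
        atTop (nhds (∫ x, g x * φ x ∂(volume.restrict (Ioc (0 : ℝ) That)))))
    (hsum : ∀ n, ∀ᵐ x ∂(volume.restrict (Ioc (0 : ℝ) That)),
      gseq n x + hseq n x = 1)
    (hle : ∀ᵐ x ∂(volume.restrict (Ioc (0 : ℝ) That)), g x + h x ≤ 1)
    (hlimsup : ∀ τ ∈ Icc (0 : ℝ) That,
      limsup (fun n => ∫ x in (0 : ℝ)..τ, hseq n x) atTop ≤ ∫ x in (0 : ℝ)..τ, h x) :
    ∀ᵐ x ∂(volume.restrict (Ioc (0 : ℝ) That)), g x + h x = 1 := by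
  set μ := volume.restrict (Ioc (0 : ℝ) That) with hμdef
  have hμ : μ univ = ENNReal.ofReal That := by
    simp [hμdef, Real.volume_Ioc]
  have hgseqInt : ∀ n, Integrable (gseq n) μ := fun n =>
    (integrable_const (1 : ℝ)).mono' (hgseqm n).aestronglyMeasurable
      ((hgseq01 n).mono fun x hx => by
        rw [Real.norm_eq_abs, abs_le]; constructor <;> linarith [hx.1, hx.2])
  have hIseq : ∀ n, ∫ x, hseq n x ∂μ = That - ∫ x, gseq n x ∂μ := by
    intro n
    have hcong : (fun x => hseq n x) =ᵐ[μ] fun x => 1 - gseq n x :=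
      (hsum n).mono fun x hx => show hseq n x = 1 - gseq n x by linarith
    rw [integral_congr_ae hcong, integral_sub (integrable_const 1) (hgseqInt n),
      integral_const, measureReal_def, hμ, smul_eq_mul, ENNReal.toReal_ofReal hThat.le, mul_one]
  have htend : Tendsto (fun n => ∫ x, gseq n x ∂μ) atTop (nhds (∫ x, g x ∂μ)) := by
    simpa using hweakstar (fun _ => 1) (integrable_const 1)
  have key : That - ∫ x, g x ∂μ ≤ ∫ x, h x ∂μ := by
    have h1 := hlimsup That ⟨hThat.le, le_refl That⟩
    have h2 : (fun n => ∫ x in (0 : ℝ)..That, hseq n x)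
        = fun n => That - ∫ x, gseq n x ∂μ := funext fun n => by
      rw [intervalIntegral.integral_of_le hThat.le]; exact hIseq n
    rw [h2, intervalIntegral.integral_of_le hThat.le] at h1
    have h3 : Tendsto (fun n => That - ∫ x, gseq n x ∂μ) atTop
        (nhds (That - ∫ x, g x ∂μ)) := tendsto_const_nhds.sub htend
    rwa [h3.limsup_eq] at h1
  have haddInt : Integrable (fun x => g x + h x) μ := hgint.add hhint
  have hghInt : Integrable (fun x => 1 - (g x + h x)) μ :=
    (integrable_const 1).sub haddInt
  have hnn : 0 ≤ᵐ[μ] fun x => 1 - (g x + h x) := hle.mono fun x hx => by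
    simp only [Pi.zero_apply]; linarith
  have hint_le : ∫ x, (1 - (g x + h x)) ∂μ ≤ 0 := by
    rw [integral_sub (integrable_const 1) haddInt, integral_add hgint hhint,
      integral_const, measureReal_def, hμ, smul_eq_mul, ENNReal.toReal_ofReal hThat.le, mul_one]
    linarith
  have hint0 : ∫ x, (1 - (g x + h x)) ∂μ = 0 :=
    le_antisymm hint_le (integral_nonneg_of_ae hnn)
  have hzero := (integral_eq_zero_iff_of_nonneg_ae hnn hghInt).mp hint0
  exact hzero.mono fun x hx => by
    simp only [Pi.zero_apply] at hx; linarith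
end
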